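/- Let W be a normal random variable and δ > 0. Then inf{ E[log|ε W² − y|] : 0 < ε ≤ 1, y > δ } > −∞. -/

import Mathlib

open ProbabilityTheory MeasureTheory Set


/-- Dominating function for the negative part of `log` near the singularity. -/
noncomputable def sgG0 : ℝ → ℝ :=
  (Set.Ioo (-1 : ℝ) 1).indicator (fun u => 2 * |u| ^ (-(1/2) : ℝ))

lemma sgG0_nonneg (u : ℝ) : 0 ≤ sgG0 u := by
  unfold sgG0
  rcases em (u ∈ Set.Ioo (-1:ℝ) 1) with h | h
  · rw [Set.indicator_of_mem h]; positivity
  · rw [Set.indicator_of_notMem h]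

lemma sgG0_meas : Measurable sgG0 := by
  apply Measurable.indicator _ measurableSet_Ioo
  exact (measurable_id.abs.pow_const _).const_mul 2 |>.mono le_rfl le_rfl

lemma llog_le_sgG0 (u : ℝ) : max 0 (-Real.log |u|) ≤ sgG0 u := by
  unfold sgG0
  rcases em (u ∈ Set.Ioo (-1:ℝ) 1) with h | h
  · rw [Set.indicator_of_mem h]
    rcases eq_or_ne u 0 with rfl | hu
    · simp [Real.zero_rpow (by norm_num : (-(1/2):ℝ) ≠ 0)]
    · have ht : 0 < |u| := abs_pos.mpr hu
      have h1 : -Real.log |u| = 2 * Real.log (|u| ^ (-(1/2):ℝ)) := by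
        rw [Real.log_rpow ht]; ring
      have h2 : Real.log (|u| ^ (-(1/2):ℝ)) ≤ |u| ^ (-(1/2):ℝ) :=
        (Real.log_le_sub_one_of_pos (Real.rpow_pos_of_pos ht _)).trans (by linarith)
      have h3 : (0:ℝ) ≤ 2 * |u| ^ (-(1/2):ℝ) := by positivity
      exact max_le h3 (by rw [h1]; linarith)
  · rw [Set.indicator_of_notMem h]
    have h1 : (1:ℝ) ≤ |u| := by
      rw [Set.mem_Ioo, not_and_or, not_lt, not_lt] at h
      rcases h with h | h
      · exact le_abs.mpr (Or.inr (by linarith))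
      · exact le_abs.mpr (Or.inl h)
    have := Real.log_nonneg h1
    exact max_le le_rfl (by linarith)

lemma sgG0_integrable : Integrable sgG0 (volume : Measure ℝ) := by
  rw [sgG0, integrable_indicator_iff measurableSet_Ioo]
  have h1 : IntegrableOn (fun u : ℝ => 2 * |u| ^ (-(1/2):ℝ)) (Set.Ioc 0 1) volume := by
    have h0 : IntervalIntegrable (fun u : ℝ => u ^ (-(1/2):ℝ)) volume 0 1 :=
      intervalIntegral.intervalIntegrable_rpow' (by norm_num)
    rw [intervalIntegrable_iff, Set.uIoc_of_le (by norm_num : (0:ℝ) ≤ 1)] at h0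
    exact (show IntegrableOn (fun u : ℝ => 2 * u ^ (-(1/2):ℝ)) (Set.Ioc 0 1) volume from h0.const_mul 2).congr_fun (fun u hu => by rw [abs_of_pos hu.1]) measurableSet_Ioc
  have h2 : IntegrableOn (fun u : ℝ => 2 * |u| ^ (-(1/2):ℝ)) (Set.Ioc (-1) 0) volume := by
    have h0 : Integrable ((Set.Ioc (0:ℝ) 1).indicator (fun u : ℝ => 2 * |u| ^ (-(1/2):ℝ))) volume :=
      (integrable_indicator_iff measurableSet_Ioc).mpr h1
    have h3 : Integrable
        (fun u : ℝ => ((Set.Ioc (0:ℝ) 1).indicator (fun t : ℝ => 2 * |t| ^ (-(1/2):ℝ))) (0 - u))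
        volume := h0.comp_sub_left 0
    refine (show IntegrableOn _ (Set.Ioc (-1:ℝ) 0) volume from h3.integrableOn).congr_fun ?_ measurableSet_Ioc
    intro u hu
    simp only [zero_sub]
    rcases lt_or_eq_of_le hu.2 with hu0 | rfl
    · rw [Set.indicator_of_mem (by constructor <;> [linarith [hu.1]; linarith [hu.1]] :
        -u ∈ Set.Ioc (0:ℝ) 1), abs_neg]
    · rw [Set.indicator_of_notMem (by simp : -(0:ℝ) ∉ Set.Ioc (0:ℝ) 1)]
      simp [Real.zero_rpow (by norm_num : (-(1/2):ℝ) ≠ 0)]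
  have h4 : IntegrableOn (fun u : ℝ => 2 * |u| ^ (-(1/2):ℝ))
      (Set.Ioc (-1) 0 ∪ Set.Ioc 0 1) volume := h2.union h1
  exact h4.mono_set (fun u hu => by
    rcases le_or_gt u 0 with h | h
    · exact Or.inl ⟨hu.1, h⟩
    · exact Or.inr ⟨h, hu.2.le⟩)


lemma neg_pospart_le_integral (μ : Measure ℝ) (f : ℝ → ℝ) :
    - ∫ w, max 0 (-f w) ∂μ ≤ ∫ w, f w ∂μ := by
  by_cases hf : Integrable f μ
  · have h1 : Integrable (fun w => max 0 (-f w)) μ := by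
      simpa [max_comm] using hf.neg.pos_part
    have h2 : ∀ w, -(max 0 (-f w)) ≤ f w := fun w => by
      have := le_max_right 0 (-f w); linarith
    calc - ∫ w, max 0 (-f w) ∂μ = ∫ w, -(max 0 (-f w)) ∂μ := (integral_neg _).symm
      _ ≤ ∫ w, f w ∂μ := integral_mono h1.neg hf h2
  · rw [integral_undef hf]
    have : 0 ≤ ∫ w, max 0 (-f w) ∂μ := integral_nonneg fun w => le_max_left _ _
    linarith

lemma key_pointwise {δ ε y : ℝ} (hδ : 0 < δ) (hε : 0 < ε) (hε1 : ε ≤ 1) (hy : δ < y) (w : ℝ) :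
    max 0 (-Real.log |ε * w ^ 2 - y|) ≤
      max 0 (-Real.log (δ/2)) + ((1 + max 0 (-Real.log δ))/δ) * w ^ 2
        + sgG0 (w - Real.sqrt (y/ε)) + sgG0 (w + Real.sqrt (y/ε)) := by
  set r := Real.sqrt (y/ε) with hrdef
  have hy0 : 0 < y := hδ.trans hy
  have hr : 0 ≤ r := Real.sqrt_nonneg _
  have hr2 : r ^ 2 = y / ε := Real.sq_sqrt (by positivity)
  have hK : (0:ℝ) ≤ max 0 (-Real.log (δ/2)) := le_max_left _ _
  have hmax0 : (0:ℝ) ≤ max 0 (-Real.log δ) := le_max_left _ _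
  have hB : (0:ℝ) ≤ ((1 + max 0 (-Real.log δ))/δ) * w ^ 2 :=
    mul_nonneg (div_nonneg (by linarith) hδ.le) (sq_nonneg w)
  have hG1 : 0 ≤ sgG0 (w - r) := sgG0_nonneg _
  have hG2 : 0 ≤ sgG0 (w + r) := sgG0_nonneg _
  rcases le_or_gt (ε * w ^ 2) (y/2) with hc | hc
  · -- far from the roots
    have hneg : ε * w ^ 2 - y < 0 := by linarith
    have h1 : δ/2 ≤ |ε * w ^ 2 - y| := by rw [abs_of_neg hneg]; linarith
    have h2 : -Real.log |ε * w ^ 2 - y| ≤ max 0 (-Real.log (δ/2)) := by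
      have := Real.log_le_log (by positivity : (0:ℝ) < δ/2) h1
      have := le_max_right (0:ℝ) (-Real.log (δ/2))
      linarith
    exact max_le (by linarith) (by linarith)
  · rcases eq_or_ne (ε * w ^ 2 - y) 0 with h0 | h0
    · rw [h0]
      simp only [abs_zero, Real.log_zero, neg_zero, max_self]
      linarith
    · have hw2 : δ/(2*ε) < w ^ 2 := by
        rw [div_lt_iff₀ (by positivity : (0:ℝ) < 2*ε)]; nlinarith
      have hfacr : ε * r ^ 2 = y := by rw [hr2]; field_simp
      have hfac0 : ε * w ^ 2 - y = ε * ((w - r) * (w + r)) := by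
        have : ε * ((w - r) * (w + r)) = ε * w ^ 2 - ε * r ^ 2 := by ring
        rw [this, hfacr]
      have hfac : |ε * w ^ 2 - y| = ε * (|w - r| * |w + r|) := by
        rw [hfac0, abs_mul, abs_mul, abs_of_pos hε]
      have hne : w - r ≠ 0 ∧ w + r ≠ 0 := by
        rw [hfac0] at h0
        have := mul_ne_zero_iff.mp h0
        exact mul_ne_zero_iff.mp this.2
      have hA : 0 < |w - r| := abs_pos.mpr hne.1
      have hBb : 0 < |w + r| := abs_pos.mpr hne.2
      have h2r : 2 * r ≤ |w - r| + |w + r| := by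
        have h := abs_sub (w + r) (w - r)
        have : |(w + r) - (w - r)| = 2 * r := by
          rw [show (w + r) - (w - r) = 2*r by ring, abs_of_nonneg (by linarith)]
        linarith
      have hmaxr : r ≤ max |w - r| |w + r| := by
        have h1 := le_max_left |w - r| |w + r|
        have h2 := le_max_right |w - r| |w + r|
        linarith
      have hminpos : 0 < min |w - r| |w + r| := lt_min hA hBb
      have h5 : ε * r = Real.sqrt (ε * y) := by
        rw [show ε * y = ε^2 * (y/ε) by field_simp, Real.sqrt_mul (by positivity), Real.sqrt_sq hε.le]
      have h6 : Real.sqrt (ε * δ) ≤ ε * r := by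
        rw [h5]; exact Real.sqrt_le_sqrt (by nlinarith)
      have hsp : 0 < Real.sqrt (ε * δ) := Real.sqrt_pos.mpr (by positivity)
      have hlow : Real.sqrt (ε * δ) * min |w - r| |w + r| ≤ |ε * w ^ 2 - y| := by
        rw [hfac]
        have hmm : max |w - r| |w + r| * min |w - r| |w + r| = |w - r| * |w + r| :=
          max_mul_min _ _
        calc Real.sqrt (ε * δ) * min |w - r| |w + r|
            ≤ (ε * r) * min |w - r| |w + r| :=
              mul_le_mul_of_nonneg_right h6 hminpos.le
          _ ≤ ε * (max |w - r| |w + r| * min |w - r| |w + r|) := by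
              have := mul_le_mul_of_nonneg_right hmaxr hminpos.le
              nlinarith
          _ = ε * (|w - r| * |w + r|) := by rw [hmm]
      have hlogle : -Real.log |ε * w ^ 2 - y| ≤
          -(Real.log (Real.sqrt (ε * δ))) - Real.log (min |w - r| |w + r|) := by
        have h7 := Real.log_le_log (by positivity) hlow
        rw [Real.log_mul hsp.ne' hminpos.ne'] at h7
        linarith
      have hterm1 : -(Real.log (Real.sqrt (ε * δ))) ≤ ((1 + max 0 (-Real.log δ))/δ) * w ^ 2 := by
        rw [Real.log_sqrt (by positivity), Real.log_mul hε.ne' hδ.ne']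
        have e0 : Real.log ε⁻¹ ≤ ε⁻¹ - 1 := Real.log_le_sub_one_of_pos (inv_pos.mpr hε)
        rw [Real.log_inv] at e0
        have h1 : ε * (-Real.log ε) ≤ 1 := by
          have h2 : ε * (ε⁻¹ - 1) ≤ 1 := by
            rw [mul_sub, mul_inv_cancel₀ hε.ne']; linarith
          exact le_trans (mul_le_mul_of_nonneg_left e0 hε.le) h2
        have h2 : ε * (-Real.log δ) ≤ max 0 (-Real.log δ) := by
          rcases le_total (-Real.log δ) 0 with h | h
          · have := mul_nonpos_of_nonneg_of_nonpos hε.le h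
            linarith
          · have h1' : ε * (-Real.log δ) ≤ 1 * (-Real.log δ) :=
              mul_le_mul_of_nonneg_right hε1 h
            have := le_max_right (0:ℝ) (-Real.log δ)
            linarith
        have hBc : (0:ℝ) ≤ (1 + max 0 (-Real.log δ))/δ := div_nonneg (by linarith) hδ.le
        have h3 : (1 + max 0 (-Real.log δ))/δ * (δ/(2*ε)) ≤ (1 + max 0 (-Real.log δ))/δ * w ^ 2 :=
          mul_le_mul_of_nonneg_left hw2.le hBc
        have h4 : (1 + max 0 (-Real.log δ))/δ * (δ/(2*ε)) = (1 + max 0 (-Real.log δ))/(2*ε) := by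
          field_simp
        have h5' : -((Real.log ε + Real.log δ)/2) ≤ (1 + max 0 (-Real.log δ))/(2*ε) := by
          rw [le_div_iff₀ (by positivity : (0:ℝ) < 2*ε)]
          have expand : -((Real.log ε + Real.log δ)/2) * (2*ε)
              = ε * (-Real.log ε) + ε * (-Real.log δ) := by ring
          rw [expand]; linarith
        calc -((Real.log ε + Real.log δ)/2) ≤ (1 + max 0 (-Real.log δ))/(2*ε) := h5'
          _ = (1 + max 0 (-Real.log δ))/δ * (δ/(2*ε)) := h4.symm
          _ ≤ _ := h3
      have hterm2 : -Real.log (min |w - r| |w + r|) ≤ sgG0 (w - r) + sgG0 (w + r) := by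
        rcases min_cases |w - r| |w + r| with ⟨hm, _⟩ | ⟨hm, _⟩
        · rw [hm]
          calc -Real.log |w - r| ≤ max 0 (-Real.log |w - r|) := le_max_right _ _
            _ ≤ sgG0 (w - r) := llog_le_sgG0 _
            _ ≤ _ := le_add_of_nonneg_right hG2
        · rw [hm]
          calc -Real.log |w + r| ≤ max 0 (-Real.log |w + r|) := le_max_right _ _
            _ ≤ sgG0 (w + r) := llog_le_sgG0 _
            _ ≤ _ := le_add_of_nonneg_left hG1
      exact max_le (by linarith) (by linarith)

theorem stmt11 (m : ℝ) (v : NNReal) (hv : v ≠ 0) (δ : ℝ) (hδ : 0 < δ) :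
    ∃ c : ℝ, ∀ ε y : ℝ, 0 < ε → ε ≤ 1 → δ < y →
      c ≤ ∫ w, Real.log |ε * w ^ 2 - y| ∂(gaussianReal m v) := by
  have hv' : 0 < (v:ℝ) := by
    have : (0:NNReal) < v := pos_iff_ne_zero.mpr hv
    exact_mod_cast this
  set μ := gaussianReal m v with hμdef
  have hμ : μ = (volume : Measure ℝ).withDensity (gaussianPDF m v) :=
    gaussianReal_of_var_ne_zero m hv
  set p := gaussianPDFReal m v with hpdef
  set M : ℝ := (Real.sqrt (2 * Real.pi * v))⁻¹ with hMdef
  have hM0 : 0 ≤ M := by positivity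
  have hppos : ∀ x, 0 < p x := fun x => gaussianPDFReal_pos m v x hv
  have hpM : ∀ x, p x ≤ M := by
    intro x
    have h1 : Real.exp (-(x - m)^2 / (2*(v:ℝ))) ≤ 1 := by
      rw [Real.exp_le_one_iff, neg_div]
      have : (0:ℝ) ≤ (x - m)^2 / (2*(v:ℝ)) := by positivity
      linarith
    have h2 : p x = M * Real.exp (-(x - m)^2 / (2*(v:ℝ))) := rfl
    rw [h2]
    calc M * Real.exp (-(x - m)^2 / (2*(v:ℝ))) ≤ M * 1 :=
          mul_le_mul_of_nonneg_left h1 hM0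
      _ = M := mul_one M
  -- conversion of integrals
  have hconv : ∀ q : ℝ → ℝ, ∫ w, q w ∂μ = ∫ w, p w * q w := by
    intro q
    rw [hμ]
    have hpdf : gaussianPDF m v = fun x => ((Real.toNNReal (p x) : NNReal) : ENNReal) := rfl
    rw [hpdf, integral_withDensity_eq_integral_smul
      ((measurable_gaussianPDFReal m v).real_toNNReal) q]
    congr 1; funext x
    rw [NNReal.smul_def, Real.coe_toNNReal _ (hppos x).le, smul_eq_mul]
  -- integrability transfer
  have htrans : ∀ q : ℝ → ℝ, Integrable (fun x => q x * p x) volume → Integrable q μ := by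
    intro q hq
    rw [hμ, integrable_withDensity_iff (measurable_gaussianPDF m v)
      (ae_of_all _ fun x => ENNReal.ofReal_lt_top)]
    refine hq.congr (ae_of_all _ fun x => ?_)
    show q x * p x = q x * (gaussianPDF m v x).toReal
    have h : gaussianPDF m v x = ENNReal.ofReal (p x) := rfl
    rw [h, ENNReal.toReal_ofReal (hppos x).le]
  -- integrability of w^2
  have hb : (0:ℝ) < 1/(2*(v:ℝ)) := by positivity
  have hsq : Integrable (fun w : ℝ => w ^ 2) μ := by
    apply htrans
    have g2 : Integrable (fun u : ℝ => u ^ (2:ℝ) * Real.exp (-(1/(2*(v:ℝ))) * u^2)) volume :=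
      integrable_rpow_mul_exp_neg_mul_sq hb (by norm_num)
    have g2' : Integrable (fun u : ℝ => u ^ 2 * Real.exp (-(1/(2*(v:ℝ))) * u^2)) volume := by
      refine g2.congr (ae_of_all _ fun u => ?_)
      show u ^ (2:ℝ) * Real.exp (-(1/(2*(v:ℝ))) * u^2)
          = u ^ (2:ℕ) * Real.exp (-(1/(2*(v:ℝ))) * u^2)
      rw [show ((2:ℝ)) = ((2:ℕ):ℝ) by norm_num, Real.rpow_natCast]
    have g1 : Integrable (fun u : ℝ => u * Real.exp (-(1/(2*(v:ℝ))) * u^2)) volume :=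
      integrable_mul_exp_neg_mul_sq hb
    have g0 : Integrable (fun u : ℝ => Real.exp (-(1/(2*(v:ℝ))) * u^2)) volume :=
      integrable_exp_neg_mul_sq hb
    have base : Integrable
        (fun u : ℝ => M * ((u + m)^2 * Real.exp (-(1/(2*(v:ℝ))) * u^2))) volume := by
      have comb := ((g2'.add (g1.const_mul (2*m))).add (g0.const_mul (m^2))).const_mul M
      refine comb.congr (ae_of_all _ fun u => ?_)
      simp only [Pi.add_apply]
      ring
    have base2 := base.comp_sub_right m
    refine base2.congr (ae_of_all _ fun x => ?_)
    show M * ((x - m + m)^2 * Real.exp (-(1/(2*(v:ℝ))) * (x - m)^2)) = x ^ 2 * p x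
    have h2 : p x = M * Real.exp (-(x - m)^2 / (2*(v:ℝ))) := rfl
    rw [h2, show x - m + m = x by ring,
      show -(1/(2*(v:ℝ))) * (x - m)^2 = -(x - m)^2 / (2*(v:ℝ)) by ring]
    ring
  set S := ∫ w, w ^ 2 ∂μ with hSdef
  have hS0 : 0 ≤ S := integral_nonneg fun w => sq_nonneg w
  -- sgG0 shifted: integrable wrt μ and integral bound
  have hsgμint : ∀ a : ℝ, Integrable (fun w => sgG0 (w - a)) μ := by
    intro a
    apply htrans
    refine Integrable.mono' ((sgG0_integrable.comp_sub_right a).const_mul M)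
      (((sgG0_meas.comp (measurable_id.sub_const a)).mul
        (measurable_gaussianPDFReal m v)).aestronglyMeasurable)
      (ae_of_all _ fun x => ?_)
    rw [Real.norm_eq_abs, abs_of_nonneg (mul_nonneg (sgG0_nonneg _) (hppos x).le)]
    calc sgG0 (x - a) * p x ≤ sgG0 (x - a) * M :=
          mul_le_mul_of_nonneg_left (hpM x) (sgG0_nonneg _)
      _ = M * sgG0 (x - a) := mul_comm _ _
  set J := ∫ u, sgG0 u with hJdef
  have hJ0 : 0 ≤ J := integral_nonneg sgG0_nonneg
  have hsgbound : ∀ a : ℝ, ∫ w, sgG0 (w - a) ∂μ ≤ M * J := by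
    intro a
    rw [hconv]
    have h1 : ∫ w, p w * sgG0 (w - a) ≤ ∫ w, M * sgG0 (w - a) :=
      integral_mono_of_nonneg
        (ae_of_all _ fun w => mul_nonneg (hppos w).le (sgG0_nonneg _))
        ((sgG0_integrable.comp_sub_right a).const_mul M)
        (ae_of_all _ fun w => mul_le_mul_of_nonneg_right (hpM w) (sgG0_nonneg _))
    have h2 : ∫ w, M * sgG0 (w - a) = M * ∫ w, sgG0 (w - a) := integral_const_mul M _
    have h3 : ∫ w, sgG0 (w - a) = J := integral_sub_right_eq_self sgG0 a
    rw [h2, h3] at h1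
    exact h1
  -- main bound
  refine ⟨-(max 0 (-Real.log (δ/2)) + ((1 + max 0 (-Real.log δ))/δ) * S + (M*J + M*J)), ?_⟩
  intro ε y hε hε1 hy
  set r := Real.sqrt (y/ε) with hrdef
  have hint : Integrable (fun w =>
      max 0 (-Real.log (δ/2)) + ((1 + max 0 (-Real.log δ))/δ) * w ^ 2
        + sgG0 (w - r) + sgG0 (w + r)) μ := by
    have hplus : Integrable (fun w => sgG0 (w + r)) μ := by
      have := hsgμint (-r)
      simpa [sub_neg_eq_add] using this
    exact (((integrable_const _).add (hsq.const_mul _)).add (hsgμint r)).add hplus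
  have h1 : ∫ w, max 0 (-Real.log |ε * w ^ 2 - y|) ∂μ ≤
      ∫ w, (max 0 (-Real.log (δ/2)) + ((1 + max 0 (-Real.log δ))/δ) * w ^ 2
        + sgG0 (w - r) + sgG0 (w + r)) ∂μ :=
    integral_mono_of_nonneg (ae_of_all _ fun w => le_max_left _ _) hint
      (ae_of_all _ fun w => key_pointwise hδ hε hε1 hy w)
  have hplus : Integrable (fun w => sgG0 (w + r)) μ := by
    have := hsgμint (-r)
    simpa [sub_neg_eq_add] using this
  have hI1 : Integrable (fun w : ℝ => max 0 (-Real.log (δ/2))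
      + ((1 + max 0 (-Real.log δ))/δ) * w ^ 2) μ :=
    (integrable_const _).add (hsq.const_mul _)
  have hI2 : Integrable (fun w : ℝ => max 0 (-Real.log (δ/2))
      + ((1 + max 0 (-Real.log δ))/δ) * w ^ 2 + sgG0 (w - r)) μ := hI1.add (hsgμint r)
  have e1 : ∫ w, (max 0 (-Real.log (δ/2)) + ((1 + max 0 (-Real.log δ))/δ) * w ^ 2
        + sgG0 (w - r) + sgG0 (w + r)) ∂μ
      = (∫ w, (max 0 (-Real.log (δ/2)) + ((1 + max 0 (-Real.log δ))/δ) * w ^ 2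
        + sgG0 (w - r)) ∂μ) + ∫ w, sgG0 (w + r) ∂μ := integral_add hI2 hplus
  have e2 : ∫ w, (max 0 (-Real.log (δ/2)) + ((1 + max 0 (-Real.log δ))/δ) * w ^ 2
        + sgG0 (w - r)) ∂μ
      = (∫ w, (max 0 (-Real.log (δ/2)) + ((1 + max 0 (-Real.log δ))/δ) * w ^ 2) ∂μ)
        + ∫ w, sgG0 (w - r) ∂μ := integral_add hI1 (hsgμint r)
  have e3 : ∫ w, (max 0 (-Real.log (δ/2)) + ((1 + max 0 (-Real.log δ))/δ) * w ^ 2) ∂μ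
      = (∫ _w, max 0 (-Real.log (δ/2)) ∂μ)
        + ∫ w, ((1 + max 0 (-Real.log δ))/δ) * w ^ 2 ∂μ :=
    integral_add (integrable_const _) (hsq.const_mul _)
  have e4 : ∫ _w, max 0 (-Real.log (δ/2)) ∂μ = max 0 (-Real.log (δ/2)) := by
    simp [hμdef]
  have e5 : ∫ w, ((1 + max 0 (-Real.log δ))/δ) * w ^ 2 ∂μ
      = ((1 + max 0 (-Real.log δ))/δ) * S := integral_const_mul _ _
  have hb1 : ∫ w, sgG0 (w - r) ∂μ ≤ M * J := hsgbound r
  have hb2 : ∫ w, sgG0 (w + r) ∂μ ≤ M * J := by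
    have := hsgbound (-r)
    simpa [sub_neg_eq_add] using this
  have hfinal := neg_pospart_le_integral μ (fun w => Real.log |ε * w ^ 2 - y|)
  linarith [h1, e1, e2, e3, e4, e5, hb1, hb2, hfinal]
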